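/- Let 0 < λ ≤ 1/(8π), δ > 0, and let ω_per = ⋃_{(k,l)∈ℤ²} ((δk, δl) + λδ·ω̄) where ω ⊂ B(0,1) ⊂ ℝ². Then for any circle C_ρ of radius ρ ≥ δ/3, the 1-dimensional Hausdorff measure of C_ρ ∩ ω_per is at most 16π²λρ. -/

import Mathlib

open MeasureTheory Metric Set

section Aux
open Complex
open scoped ENNReal NNReal

lemma abs_mix_sq (ρ m u : ℝ) :
    ‖(ρ:ℂ) * Complex.exp (u * Complex.I) - (m:ℂ)‖ ^ 2
      = ρ^2 + m^2 - 2*ρ*m*Real.cos u := by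
  rw [Complex.sq_norm]
  simp [Complex.normSq_apply, Complex.exp_ofReal_mul_I_re, Complex.exp_ofReal_mul_I_im]
  nlinarith [Real.sin_sq_add_cos_sq u]

lemma abs_exp_sub_exp (t s : ℝ) :
    ‖Complex.exp (t * Complex.I) - Complex.exp (s * Complex.I)‖ ≤ |t - s| := by
  have h : Complex.exp (t * Complex.I) - Complex.exp (s * Complex.I)
      = Complex.exp (s * Complex.I) * (Complex.exp ((t - s : ℝ) * Complex.I) - 1) := by
    rw [mul_sub, ← Complex.exp_add, mul_one]
    push_cast
    ring_nf
  rw [h, norm_mul, Complex.norm_exp_ofReal_mul_I, one_mul]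
  have h2 : ‖Complex.exp ((t - s : ℝ) * Complex.I) - 1‖ ^ 2 ≤ (t - s)^2 := by
    have h1 := abs_mix_sq 1 1 (t - s)
    simp only [Complex.ofReal_one, one_mul] at h1
    rw [h1]
    nlinarith [Real.one_sub_sq_div_two_le_cos (x := t - s)]
  have h3 := norm_nonneg (Complex.exp ((t - s : ℝ) * Complex.I) - 1)
  nlinarith [abs_nonneg (t - s), _root_.sq_abs (t - s)]

lemma abs_le_of_sq_le' {x y : ℝ} (hy : 0 ≤ y) (h : x^2 ≤ y^2) : |x| ≤ y := by
  nlinarith [abs_nonneg x, _root_.sq_abs x]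

lemma cos_half_aux (v : ℝ) : 1 - Real.cos v = 2 * Real.sin (|v|/2) ^ 2 := by
  have h3 := Real.cos_two_mul (|v|/2)
  rw [show 2*(|v|/2) = |v| by ring] at h3
  rw [show Real.cos v = Real.cos |v| from (Real.cos_abs v).symm, h3]
  nlinarith [Real.sin_sq_add_cos_sq (|v|/2)]

lemma jordan_aux {u : ℝ} (h1 : -Real.pi ≤ u) (h2 : u ≤ Real.pi) :
    2 * u^2 ≤ Real.pi^2 * (1 - Real.cos u) := by
  have hπ := Real.pi_pos
  have habsu : |u| ≤ Real.pi := abs_le.mpr ⟨h1, h2⟩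
  have hsinn : 0 ≤ Real.sin (|u|/2) :=
    Real.sin_nonneg_of_nonneg_of_le_pi (by positivity) (by linarith)
  have hj := Real.mul_le_sin (x := |u|/2) (by positivity) (by linarith)
  have hj2 : |u| / Real.pi ≤ Real.sin (|u|/2) := by
    rw [show |u| / Real.pi = 2 / Real.pi * (|u|/2) by ring]; exact hj
  rw [div_le_iff₀ hπ] at hj2
  rw [cos_half_aux u]
  nlinarith [mul_self_le_mul_self (abs_nonneg u) hj2, _root_.sq_abs u]

lemma usq_aux {u ρ r : ℝ} (hρ0 : 0 < ρ) (hr : 0 < r)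
    (hj : 2 * u^2 ≤ Real.pi^2 * (1 - Real.cos u))
    (h1c : ρ^2 * (1 - Real.cos u) ≤ r^2) : |u| ≤ Real.pi * r / (ρ * Real.sqrt 2) := by
  have hπ := Real.pi_pos
  have hsq2 : Real.sqrt 2 ^ 2 = 2 := Real.sq_sqrt (by norm_num)
  have ha2 : (Real.pi * r / (ρ * Real.sqrt 2))^2 = Real.pi^2 * r^2 / (ρ^2 * 2) := by
    rw [div_pow, mul_pow, mul_pow, hsq2]
  apply abs_le_of_sq_le' (by positivity)
  rw [ha2, le_div_iff₀ (by positivity)]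
  nlinarith [mul_le_mul_of_nonneg_left h1c (sq_nonneg Real.pi),
    mul_le_mul_of_nonneg_left hj (sq_nonneg ρ)]

lemma h1c_aux {ρ m r cu : ℝ} (hρ0 : 0 < ρ) (hm1 : ρ - r ≤ m) (hrρ : 2*r ≤ ρ)
    (hcos : ρ^2 + m^2 - 2*ρ*m*cu ≤ r^2) (hc1 : cu ≤ 1) : ρ^2 * (1 - cu) ≤ r^2 := by
  have e1 : (0:ℝ) ≤ 2*m - ρ := by linarith
  have e2 : (0:ℝ) ≤ 1 - cu := by linarith
  nlinarith [mul_nonneg (mul_nonneg hρ0.le e1) e2, sq_nonneg (ρ - m)]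

set_option maxHeartbeats 1000000 in
lemma arc_bound (c p : ℂ) (ρ r : ℝ) (hr : 0 < r) (hrρ : 2 * r ≤ ρ) :
    μH[1] (sphere c ρ ∩ closedBall p r) ≤ ENNReal.ofReal (Real.sqrt 2 * Real.pi * r) := by
  have hρ0 : 0 < ρ := by linarith
  have hπ := Real.pi_pos
  rcases Set.eq_empty_or_nonempty (sphere c ρ ∩ closedBall p r) with he | ⟨z₀, hz₀s, hz₀b⟩
  · rw [he]; simp
  have hz₀c : dist z₀ c = ρ := hz₀s
  have hz₀p : dist z₀ p ≤ r := hz₀b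
  set m := ‖p - c‖ with hmdef
  have hmd : m = dist p c := by rw [hmdef, Complex.dist_eq]
  have hm1 : ρ - r ≤ m := by
    have h := dist_triangle z₀ p c
    rw [hmd]; linarith
  have hm2 : m ≤ ρ + r := by
    have h := dist_triangle p z₀ c
    rw [dist_comm p z₀] at h
    rw [hmd]; linarith
  have hm0 : 0 < m := by linarith
  have hq : p - c ≠ 0 := by
    intro h; rw [hmdef, h, norm_zero] at hm0; linarith
  set θ := (p - c).arg with hθdef
  have hpc : (m:ℂ) * Complex.exp (θ * Complex.I) = p - c := Complex.norm_mul_exp_arg_mul_I _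
  set f : ℝ → ℂ := fun t => c + (ρ:ℂ) * Complex.exp (t * Complex.I) with hfdef
  have hlip : LipschitzWith ρ.toNNReal f := by
    apply LipschitzWith.of_dist_le_mul
    intro t s
    rw [Complex.dist_eq, Real.dist_eq]
    have h : f t - f s = (ρ:ℂ) * (Complex.exp (t * Complex.I) - Complex.exp (s * Complex.I)) := by
      rw [hfdef]; ring
    rw [h, norm_mul, Complex.norm_real, Real.norm_eq_abs, abs_of_pos hρ0, Real.coe_toNNReal ρ hρ0.le]
    exact mul_le_mul_of_nonneg_left (abs_exp_sub_exp t s) hρ0.le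
  set a := Real.pi * r / (ρ * Real.sqrt 2) with hadef
  have ha0 : 0 < a := div_pos (by positivity) (by positivity)
  have hsq2 : Real.sqrt 2 ^ 2 = 2 := Real.sq_sqrt (by norm_num)
  have hs2ne : Real.sqrt 2 ≠ 0 := by positivity
  have hsub : sphere c ρ ∩ closedBall p r ⊆ f '' (Set.Icc (θ - a) (θ + a)) := by
    rintro z ⟨hzs, hzb⟩
    have hzc : ‖z - c‖ = ρ := by
      rw [← Complex.dist_eq]; exact hzs
    have hz0 : z - c ≠ 0 := by
      intro h; rw [h, norm_zero] at hzc; linarith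
    set s₀ := (z - c).arg with hs₀def
    have hs₀ : (ρ:ℂ) * Complex.exp (s₀ * Complex.I) = z - c := by
      rw [← hzc]; exact Complex.norm_mul_exp_arg_mul_I _
    have hθ1 : -Real.pi < θ := Complex.neg_pi_lt_arg _
    have hθ2 : θ ≤ Real.pi := Complex.arg_le_pi _
    have hs1 : -Real.pi < s₀ := Complex.neg_pi_lt_arg _
    have hs2 : s₀ ≤ Real.pi := Complex.arg_le_pi _
    obtain ⟨t, ht1, ht2, hte⟩ : ∃ t : ℝ, θ - Real.pi ≤ t ∧ t ≤ θ + Real.pi ∧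
        Complex.exp ((t:ℝ) * Complex.I) = Complex.exp ((s₀:ℝ) * Complex.I) := by
      rcases le_or_gt s₀ (θ + Real.pi) with h1 | h1
      · rcases le_or_gt (θ - Real.pi) s₀ with h2 | h2
        · exact ⟨s₀, h2, h1, rfl⟩
        · refine ⟨s₀ + 2 * Real.pi, by linarith, by linarith, ?_⟩
          push_cast
          rw [add_mul, Complex.exp_add, Complex.exp_two_pi_mul_I, mul_one]
      · refine ⟨s₀ - 2 * Real.pi, by linarith, by linarith, ?_⟩
        push_cast
        rw [sub_mul, Complex.exp_sub, Complex.exp_two_pi_mul_I, div_one]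
    have hft : f t = z := by
      rw [hfdef]
      simp only
      rw [hte]
      linear_combination hs₀
    refine ⟨t, ?_, hft⟩
    set u := t - θ with hudef
    have hu1 : -Real.pi ≤ u := by rw [hudef]; linarith
    have hu2 : u ≤ Real.pi := by rw [hudef]; linarith
    have hkey : Complex.exp ((θ:ℝ) * Complex.I) * Complex.exp ((u:ℝ) * Complex.I)
        = Complex.exp ((s₀:ℝ) * Complex.I) := by
      rw [← Complex.exp_add, ← hte]
      congr 1
      push_cast [hudef]
      ring
    have hzp : ‖z - p‖ ^ 2 = ρ^2 + m^2 - 2*ρ*m*Real.cos u := by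
      have hfac : z - p = Complex.exp ((θ:ℝ) * Complex.I) *
          ((ρ:ℂ) * Complex.exp ((u:ℝ) * Complex.I) - (m:ℂ)) := by
        calc z - p = (z - c) - (p - c) := by ring
        _ = (ρ:ℂ) * Complex.exp ((s₀:ℝ) * Complex.I) - (m:ℂ) * Complex.exp ((θ:ℝ) * Complex.I) := by
            rw [hs₀, hpc]
        _ = _ := by rw [← hkey]; ring
      rw [hfac, norm_mul, Complex.norm_exp_ofReal_mul_I, one_mul, abs_mix_sq]
    have hcos : ρ^2 + m^2 - 2*ρ*m*Real.cos u ≤ r^2 := by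
      rw [← hzp]
      have hd : ‖z - p‖ ≤ r := by rw [← Complex.dist_eq]; exact hzb
      exact pow_le_pow_left₀ (norm_nonneg _) hd 2
    have h1c : ρ^2 * (1 - Real.cos u) ≤ r^2 := by
      exact h1c_aux hρ0 hm1 hrρ hcos (Real.cos_le_one u)
    have habs : |u| ≤ a := by
      rw [hadef]
      exact usq_aux hρ0 hr (jordan_aux hu1 hu2) h1c
    have hh := abs_le.mp habs
    rw [hudef] at hh
    exact ⟨by linarith [hh.1], by linarith [hh.2]⟩
  calc μH[1] (sphere c ρ ∩ closedBall p r) ≤ μH[1] (f '' (Set.Icc (θ - a) (θ + a))) :=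
        measure_mono hsub
    _ ≤ (ρ.toNNReal : ℝ≥0∞) ^ (1:ℝ) * μH[1] (Set.Icc (θ - a) (θ + a)) :=
        hlip.hausdorffMeasure_image_le zero_le_one _
    _ = ENNReal.ofReal ρ * ENNReal.ofReal (2 * a) := by
        rw [MeasureTheory.hausdorffMeasure_real, Real.volume_Icc, ENNReal.rpow_one]
        congr 1
        ring
    _ = ENNReal.ofReal (ρ * (2 * a)) := (ENNReal.ofReal_mul hρ0.le).symm
    _ = ENNReal.ofReal (Real.sqrt 2 * Real.pi * r) := by
        congr 1
        rw [hadef]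
        rw [show ρ * (2 * (Real.pi * r / (ρ * Real.sqrt 2))) = (2*Real.pi*r*ρ) / (ρ * Real.sqrt 2) by ring]
        rw [div_eq_iff (by positivity)]
        linear_combination (-(Real.pi*r*ρ)) * hsq2

lemma sqrt2_le_pi : Real.sqrt 2 ≤ Real.pi := by
  nlinarith [Real.sq_sqrt (show (0:ℝ) ≤ 2 by norm_num), Real.sqrt_nonneg 2, Real.pi_gt_three]

lemma final_aux {N lam δ ρ : ℝ} (hN : 0 ≤ N) (hlam : 0 < lam) (hδ : 0 < δ) (hρ0 : 0 < ρ)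
    (hcard : N * δ ≤ 16 * ρ) :
    N * (Real.sqrt 2 * Real.pi * (lam * δ)) ≤ 16 * Real.pi^2 * lam * ρ := by
  have hπ := Real.pi_pos
  have hs := sqrt2_le_pi
  have hs0 := Real.sqrt_nonneg 2
  have h1 := mul_le_mul_of_nonneg_left hcard
    (show (0:ℝ) ≤ Real.sqrt 2 * Real.pi * lam by positivity)
  have h2 := mul_le_mul_of_nonneg_right hs
    (show (0:ℝ) ≤ 16 * Real.pi * lam * ρ by positivity)
  nlinarith [h1, h2]

lemma count_aux {N : ℕ} {x y w : ℝ} (hx : 0 ≤ x) (hy : 0 ≤ y) (hw : 0 ≤ w)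
    (h : (N : ℝ≥0∞) * (ENNReal.ofReal x)^2 * (NNReal.pi : ℝ≥0∞)
        + (ENNReal.ofReal y)^2 * (NNReal.pi : ℝ≥0∞)
        ≤ (ENNReal.ofReal w)^2 * (NNReal.pi : ℝ≥0∞)) :
    (N:ℝ) * x^2 + y^2 ≤ w^2 := by
  have hπ0 : (NNReal.pi : ℝ≥0∞) ≠ 0 := by
    simp only [ne_eq, ENNReal.coe_eq_zero]
    exact (NNReal.pi_pos).ne'
  have hπt : (NNReal.pi : ℝ≥0∞) ≠ ⊤ := ENNReal.coe_ne_top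
  rw [← add_mul] at h
  rw [ENNReal.mul_le_mul_iff_left hπ0 hπt] at h
  rw [← ENNReal.ofReal_natCast, ← ENNReal.ofReal_pow hx, ← ENNReal.ofReal_pow hy,
    ← ENNReal.ofReal_pow hw, ← ENNReal.ofReal_mul (Nat.cast_nonneg _),
    ← ENNReal.ofReal_add (by positivity) (by positivity),
    ENNReal.ofReal_le_ofReal_iff (by positivity)] at h
  exact h

lemma card_aux1 {N : ℕ} {δ ρ r : ℝ} (hδ : 0 < δ) (hρ : 0 < ρ) (hr : 0 < r) (hrδ : 24*r ≤ δ)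
    (key : (N:ℝ)*(δ/2)^2 + (ρ-(r+δ/2))^2 ≤ (ρ+r+δ/2)^2) : (N:ℝ)*δ ≤ 16*ρ := by
  have hb : r + δ/2 ≤ δ := by linarith
  have h1 : (N:ℝ)*(δ/2)^2 ≤ 4*ρ*δ := by
    nlinarith [mul_le_mul_of_nonneg_left hb hρ.le]
  nlinarith [h1, mul_pos hδ hδ]

lemma card_aux2 {N : ℕ} {δ ρ r : ℝ} (hδ : 0 < δ) (hρ3 : δ/3 ≤ ρ) (hr : 0 < r)
    (hπr : 8*Real.pi*r ≤ δ) (hcase : ρ < r + δ/2)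
    (key0 : (N:ℝ)*(δ/2)^2 + (0:ℝ)^2 ≤ (ρ+r+δ/2)^2) : (N:ℝ)*δ ≤ 16*ρ := by
  have key : (N:ℝ)*(δ/2)^2 ≤ (ρ+r+δ/2)^2 := by linarith [key0]
  have hπ := Real.pi_gt_d6
  have hb : r + δ/2 ≤ 27/50*δ := by
    nlinarith [mul_nonneg (by nlinarith : (0:ℝ) ≤ 8*Real.pi - 25) hr.le]
  have hρb : ρ + r + δ/2 ≤ 54/50*δ := by linarith
  have h2 : (N:ℝ)*(δ/2)^2 ≤ (54/50*δ)^2 := by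
    refine le_trans key ?_
    have h0 : (0:ℝ) ≤ ρ + r + δ/2 := by nlinarith
    nlinarith [h0, hρb]
  nlinarith [h2, mul_pos hδ hδ]

lemma int_one_le_sq_add_sq {a b : ℤ} (h : ¬(a = 0 ∧ b = 0)) : 1 ≤ a^2 + b^2 := by
  rcases eq_or_ne a 0 with ha | ha
  · have hb : b ≠ 0 := fun hb => h ⟨ha, hb⟩
    have := Int.one_le_abs hb
    nlinarith [_root_.sq_abs b, sq_nonneg a]
  · have := Int.one_le_abs ha
    nlinarith [_root_.sq_abs a, sq_nonneg b]

end Aux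

open scoped ENNReal NNReal in
/-- Length bound for the intersection of a large circle with the diluted periodic
inclusion set: if `λ ≤ 1/(8π)` and `ρ ≥ δ/3`, then the 1-dimensional Hausdorff measure
of `C_ρ ∩ ω_per` is at most `16π²λρ`, where
`ω_per = ⋃_{(k,l)∈ℤ²} ((δk,δl) + λδ·ω̄)` and `ω ⊆ B(0,1)`. -/
theorem stmt10 (lam δ : ℝ) (hlam : 0 < lam) (hlam' : lam ≤ 1 / (8 * Real.pi))
    (hδ : 0 < δ) (ω : Set ℂ) (hω : ω ⊆ ball (0 : ℂ) 1)
    (c : ℂ) (ρ : ℝ) (hρ : δ / 3 ≤ ρ) :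
    μH[1] (sphere c ρ ∩
        ⋃ (k : ℤ) (l : ℤ),
          (fun w => ((δ * k : ℝ) : ℂ) + ((δ * l : ℝ) : ℂ) * Complex.I
              + ((lam * δ : ℝ) : ℂ) * w) '' closure ω)
      ≤ ENNReal.ofReal (16 * Real.pi ^ 2 * lam * ρ) := by
  have hπ := Real.pi_pos
  have hπ3 : (3.141592 : ℝ) < Real.pi := Real.pi_gt_d6
  set r : ℝ := lam * δ with hrdef
  have hr0 : 0 < r := mul_pos hlam hδ
  have hπr : 8 * Real.pi * r ≤ δ := by
    have h1 : lam * (8 * Real.pi) ≤ 1 := (le_div_iff₀ (by positivity)).mp hlam'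
    have h2 := mul_le_mul_of_nonneg_right h1 hδ.le
    rw [hrdef]; nlinarith
  have hrδ : 24 * r ≤ δ := by nlinarith [mul_nonneg (by nlinarith : (0:ℝ) ≤ 8*Real.pi - 24) hr0.le]
  have hρ0 : 0 < ρ := lt_of_lt_of_le (by positivity) hρ
  have h2r : 2 * r ≤ ρ := by linarith
  set p : ℤ × ℤ → ℂ := fun s => ((δ * s.1 : ℝ) : ℂ) + ((δ * s.2 : ℝ) : ℂ) * Complex.I with hpdef
  have hpre : ∀ s : ℤ × ℤ, (p s).re = δ * s.1 := by intro s; simp [hpdef]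
  have hpim : ∀ s : ℤ × ℤ, (p s).im = δ * s.2 := by intro s; simp [hpdef]
  set F : Set (ℤ × ℤ) := {s | ρ - r ≤ dist (p s) c ∧ dist (p s) c ≤ ρ + r} with hFdef
  -- finiteness
  have hFfin : F.Finite := by
    set M : ℝ := ‖c‖ + ρ + r with hMdef
    set K : ℤ := ⌈M / δ⌉ with hKdef
    have hsub : F ⊆ (Set.Icc (-K) K) ×ˢ (Set.Icc (-K) K) := by
      rintro s ⟨h1, h2⟩
      have habs : ‖p s‖ ≤ M := by
        have heq : ‖p s‖ = dist (p s) 0 := by simp [Complex.dist_eq]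
        have heq2 : dist c 0 = ‖c‖ := by simp [Complex.dist_eq]
        have ht := dist_triangle (p s) c 0
        rw [hMdef]; linarith
      have hk : |(s.1 : ℝ)| * δ ≤ M := by
        have h3 : |(p s).re| ≤ ‖p s‖ := Complex.abs_re_le_norm _
        rw [hpre s, abs_mul, abs_of_pos hδ] at h3
        nlinarith [abs_nonneg (s.1 : ℝ)]
      have hl : |(s.2 : ℝ)| * δ ≤ M := by
        have h3 : |(p s).im| ≤ ‖p s‖ := Complex.abs_im_le_norm _
        rw [hpim s, abs_mul, abs_of_pos hδ] at h3
        nlinarith [abs_nonneg (s.2 : ℝ)]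
      have hMδ : M / δ ≤ (K : ℝ) := Int.le_ceil _
      rw [div_le_iff₀ hδ] at hMδ
      have hk2 : |(s.1 : ℝ)| ≤ (K : ℝ) := by nlinarith [abs_nonneg (s.1:ℝ)]
      have hl2 : |(s.2 : ℝ)| ≤ (K : ℝ) := by nlinarith [abs_nonneg (s.2:ℝ)]
      have hk3 := abs_le.mp hk2
      have hl3 := abs_le.mp hl2
      constructor
      · constructor <;> [exact_mod_cast neg_le.mp (by exact_mod_cast neg_le.mpr hk3.1); exact_mod_cast hk3.2]
      · constructor <;> [exact_mod_cast neg_le.mp (by exact_mod_cast neg_le.mpr hl3.1); exact_mod_cast hl3.2]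
    exact ((Set.finite_Icc _ _).prod (Set.finite_Icc _ _)).subset hsub
  -- separation of lattice points
  have hsep : ∀ s s' : ℤ × ℤ, s ≠ s' → δ ≤ dist (p s) (p s') := by
    intro s s' hne
    have hre : (p s - p s').re = δ * ((s.1 : ℝ) - (s'.1 : ℝ)) := by
      rw [Complex.sub_re, hpre, hpre]; ring
    have him : (p s - p s').im = δ * ((s.2 : ℝ) - (s'.2 : ℝ)) := by
      rw [Complex.sub_im, hpim, hpim]; ring
    have hd2 : dist (p s) (p s') ^ 2
        = (δ*((s.1:ℝ)-(s'.1:ℝ)))^2 + (δ*((s.2:ℝ)-(s'.2:ℝ)))^2 := by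
      rw [Complex.dist_eq, Complex.sq_norm, Complex.normSq_apply, hre, him]
      ring
    have hint : (1:ℤ) ≤ (s.1 - s'.1)^2 + (s.2 - s'.2)^2 := by
      apply int_one_le_sq_add_sq
      rintro ⟨h1, h2⟩
      exact hne (Prod.ext (by omega) (by omega))
    have hintR : (1:ℝ) ≤ ((s.1:ℝ)-(s'.1:ℝ))^2 + ((s.2:ℝ)-(s'.2:ℝ))^2 := by exact_mod_cast hint
    have hdd : δ^2 ≤ dist (p s) (p s')^2 := by
      rw [hd2]
      nlinarith [mul_le_mul_of_nonneg_left hintR (sq_nonneg δ)]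
    nlinarith [dist_nonneg (x := p s) (y := p s'), hδ]
  set Ft := hFfin.toFinset with hFt
  have hdisj : (↑Ft : Set (ℤ × ℤ)).PairwiseDisjoint (fun s => ball (p s) (δ/2)) := by
    intro s _ s' _ hne
    exact ball_disjoint_ball (by linarith [hsep s s' hne])
  have hcard : (Ft.card : ℝ) * δ ≤ 16 * ρ := by
    have hsum : ∑ s ∈ Ft, volume (ball (p s) (δ/2)) = volume (⋃ s ∈ Ft, ball (p s) (δ/2)) :=
      (measure_biUnion_finset hdisj (fun _ _ => measurableSet_ball)).symm
    have hsum2 : ∑ s ∈ Ft, volume (ball (p s) (δ/2))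
        = (Ft.card : ℝ≥0∞) * (ENNReal.ofReal (δ/2))^2 * NNReal.pi := by
      rw [Finset.sum_congr rfl (fun s _ => Complex.volume_ball (p s) (δ/2)),
        Finset.sum_const, nsmul_eq_mul, mul_assoc]
    have hUsub : (⋃ s ∈ Ft, ball (p s) (δ/2)) ⊆ ball c (ρ + r + δ/2) := by
      intro z hz
      simp only [Set.mem_iUnion] at hz
      obtain ⟨s, hs, hz⟩ := hz
      have hsF : s ∈ F := hFfin.mem_toFinset.mp hs
      rw [mem_ball] at hz ⊢
      calc dist z c ≤ dist z (p s) + dist (p s) c := dist_triangle _ _ _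
        _ < δ/2 + (ρ + r) := by have := hsF.2; linarith
        _ = ρ + r + δ/2 := by ring
    rcases le_or_gt (r + δ/2) ρ with hcase | hcase
    · have hdisj2 : Disjoint (⋃ s ∈ Ft, ball (p s) (δ/2)) (ball c (ρ - (r + δ/2))) := by
        rw [Set.disjoint_left]
        intro z hz hz2
        simp only [Set.mem_iUnion] at hz
        obtain ⟨s, hs, hz⟩ := hz
        have hsF : s ∈ F := hFfin.mem_toFinset.mp hs
        rw [mem_ball] at hz hz2
        have ht := dist_triangle (p s) z c
        rw [dist_comm (p s) z] at ht
        have := hsF.1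
        linarith
      have hle : volume (⋃ s ∈ Ft, ball (p s) (δ/2)) + volume (ball c (ρ - (r + δ/2)))
          ≤ volume (ball c (ρ + r + δ/2)) := by
        rw [← measure_union hdisj2 measurableSet_ball]
        exact measure_mono (Set.union_subset hUsub (ball_subset_ball (by linarith)))
      rw [← hsum, hsum2, Complex.volume_ball, Complex.volume_ball] at hle
      have key := count_aux (show (0:ℝ) ≤ δ/2 by positivity)
        (show (0:ℝ) ≤ ρ - (r+δ/2) by linarith) (show (0:ℝ) ≤ ρ+r+δ/2 by positivity) hle
      exact card_aux1 hδ hρ0 hr0 hrδ key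
    · have hle : volume (⋃ s ∈ Ft, ball (p s) (δ/2)) ≤ volume (ball c (ρ + r + δ/2)) :=
        measure_mono hUsub
      rw [← hsum, hsum2, Complex.volume_ball] at hle
      have hle2 : (Ft.card : ℝ≥0∞) * (ENNReal.ofReal (δ/2))^2 * NNReal.pi
          + (ENNReal.ofReal (0:ℝ))^2 * NNReal.pi ≤ (ENNReal.ofReal (ρ+r+δ/2))^2 * NNReal.pi := by
        have hz : (ENNReal.ofReal (0:ℝ))^2 * (NNReal.pi : ℝ≥0∞) = 0 := by
          rw [ENNReal.ofReal_zero]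
          simp
        rw [hz, add_zero]
        exact hle
      have key := count_aux (show (0:ℝ) ≤ δ/2 by positivity) le_rfl
        (show (0:ℝ) ≤ ρ+r+δ/2 by positivity) hle2
      exact card_aux2 hδ hρ hr0 hπr hcase key
  have harc : ∀ s : ℤ × ℤ, μH[1] (sphere c ρ ∩ closedBall (p s) r)
      ≤ ENNReal.ofReal (Real.sqrt 2 * Real.pi * r) := fun s => arc_bound c (p s) ρ r hr0 h2r
  have hfinal : (Ft.card:ℝ) * (Real.sqrt 2 * Real.pi * r) ≤ 16 * Real.pi^2 * lam * ρ := by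
    rw [hrdef]
    exact final_aux (Nat.cast_nonneg _) hlam hδ hρ0 hcard
  refine le_trans (measure_mono (?_ :
      _ ⊆ ⋃ s ∈ Ft, (sphere c ρ ∩ closedBall (p s) r))) ?_
  · rintro z ⟨hzs, hzu⟩
    simp only [Set.mem_iUnion, Set.mem_image] at hzu
    obtain ⟨k, l, w, hw, hwz⟩ := hzu
    have hwb : ‖w‖ ≤ 1 := by
      have hcl : closure ω ⊆ closedBall (0:ℂ) 1 := by
        rw [← closure_ball (0:ℂ) one_ne_zero]
        exact closure_mono hω
      have := hcl hw
      rwa [mem_closedBall, Complex.dist_eq, sub_zero] at this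
    have hzp : dist z (p (k, l)) ≤ r := by
      rw [Complex.dist_eq]
      have heq : z - p (k, l) = (r:ℂ) * w := by
        rw [← hwz, hpdef]; push_cast; ring
      rw [heq, norm_mul, Complex.norm_real, Real.norm_eq_abs, abs_of_pos hr0]
      exact le_trans (mul_le_mul_of_nonneg_left hwb hr0.le) (mul_one r).le
    have hzc : dist z c = ρ := hzs
    have hmem : (k, l) ∈ F := by
      constructor
      · have ht := dist_triangle z (p (k,l)) c
        linarith
      · have ht := dist_triangle (p (k,l)) z c
        rw [dist_comm (p (k,l)) z] at ht
        linarith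
    exact Set.mem_iUnion₂.mpr ⟨(k,l), hFfin.mem_toFinset.mpr hmem, hzs, by rwa [mem_closedBall]⟩
  · calc μH[1] (⋃ s ∈ Ft, (sphere c ρ ∩ closedBall (p s) r))
        ≤ ∑ s ∈ Ft, μH[1] (sphere c ρ ∩ closedBall (p s) r) :=
          measure_biUnion_finset_le _ _
      _ ≤ ∑ _s ∈ Ft, ENNReal.ofReal (Real.sqrt 2 * Real.pi * r) :=
          Finset.sum_le_sum (fun s _ => harc s)
      _ = (Ft.card : ℝ≥0∞) * ENNReal.ofReal (Real.sqrt 2 * Real.pi * r) := by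
          rw [Finset.sum_const, nsmul_eq_mul]
      _ = ENNReal.ofReal ((Ft.card:ℝ) * (Real.sqrt 2 * Real.pi * r)) := by
          rw [← ENNReal.ofReal_natCast Ft.card, ← ENNReal.ofReal_mul (Nat.cast_nonneg _)]
      _ ≤ ENNReal.ofReal (16 * Real.pi ^ 2 * lam * ρ) := ENNReal.ofReal_le_ofReal hfinal
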